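/- The minimum number of edges in a simple graph on 9 vertices such that every 5-vertex subset contains at least 2 edges is 9. -/

import Mathlib

set_option maxRecDepth 40000

open scoped Classical

/-- The number of edges of `G` with both endpoints in `S`. -/
noncomputable def edgesIn {n : ℕ} (G : SimpleGraph (Fin n)) (S : Finset (Fin n)) : ℕ :=
  (G.edgeFinset.filter (fun e => ∀ v ∈ e, v ∈ S)).card

/-- Every 5-vertex subset spans at least 2 edges. -/
def Spans2 {n : ℕ} (G : SimpleGraph (Fin n)) : Prop :=
  ∀ S : Finset (Fin n), S.card = 5 → 2 ≤ edgesIn G S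

namespace Stmt4Aux

open Finset SimpleGraph

/-- Three disjoint triangles on 9 vertices. -/
def G3 : SimpleGraph (Fin 9) where
  Adj u v := u ≠ v ∧ (u : ℕ) / 3 = (v : ℕ) / 3
  symm := by constructor; intro u v ⟨h1, h2⟩; exact ⟨h1.symm, h2.symm⟩
  loopless := by constructor; intro u ⟨h1, _⟩; exact h1 rfl

instance G3dec : DecidableRel G3.Adj := fun u v => by
  unfold G3; simp only; infer_instance

lemma cardEF {V : Type*} (G : SimpleGraph V) {i j : Fintype G.edgeSet} :
    (@SimpleGraph.edgeFinset V G i).card = (@SimpleGraph.edgeFinset V G j).card := by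
  congr 1
  ext e
  simp [SimpleGraph.mem_edgeFinset]

lemma edgesIn_eq_card {n : ℕ} (G : SimpleGraph (Fin n)) [DecidableRel G.Adj]
    (S : Finset (Fin n)) :
    edgesIn G S = #(univ.filter fun e : Sym2 (Fin n) => e ∈ G.edgeSet ∧ ∀ v ∈ e, v ∈ S) := by
  unfold edgesIn
  congr 1
  ext e
  simp [SimpleGraph.mem_edgeFinset]

lemma G3_spans2 : Spans2 G3 := by
  have key : ∀ S : Finset (Fin 9), S.card = 5 →
      2 ≤ #(univ.filter fun e : Sym2 (Fin 9) => e ∈ G3.edgeSet ∧ ∀ v ∈ e, v ∈ S) := by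
    decide
  intro S hS
  rw [edgesIn_eq_card]
  exact key S hS

lemma G3_card : #G3.edgeFinset = 9 := by decide

lemma turan27 : #(turanGraph 9 3).edgeFinset = 27 := by decide

lemma compl_bound (G : SimpleGraph (Fin 9)) (hcf : Gᶜ.CliqueFree 4) :
    #Gᶜ.edgeFinset ≤ 27 := by
  have itm := isTuranMaximal_turanGraph (n := 9) (r := 3) (by norm_num)
  have h := itm.2 hcf
  calc #Gᶜ.edgeFinset = _ := cardEF Gᶜ
    _ ≤ #(turanGraph 9 3).edgeFinset := h
    _ = 27 := turan27

lemma sum36 (G : SimpleGraph (Fin 9)) : #G.edgeFinset + #Gᶜ.edgeFinset = 36 := by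
  have htop : #(⊤ : SimpleGraph (Fin 9)).edgeFinset = 36 := by
    rw [card_edgeFinset_top_eq_card_choose_two]; decide
  have hdisj : Disjoint G.edgeFinset Gᶜ.edgeFinset := by
    rw [Finset.disjoint_left]
    intro e he he'
    rw [mem_edgeFinset] at he he'
    induction e with
    | h a b => exact he'.2 he
  have hu : G.edgeFinset ∪ Gᶜ.edgeFinset = (⊤ : SimpleGraph (Fin 9)).edgeFinset := by
    ext e
    induction e with
    | h a b =>
      simp only [Finset.mem_union, mem_edgeFinset, mem_edgeSet, compl_adj, top_adj]
      constructor
      · rintro (h | h)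
        · exact h.ne
        · exact h.1
      · intro h
        by_cases hadj : G.Adj a b
        · exact Or.inl hadj
        · exact Or.inr ⟨h, hadj⟩
  rw [← Finset.card_union_of_disjoint hdisj, hu, htop]

lemma caseA (G : SimpleGraph (Fin 9)) (hG : Spans2 G) (I : Finset (Fin 9))
    (hI4 : I.card = 4) (hind : ∀ a ∈ I, ∀ b ∈ I, ¬G.Adj a b) : 9 ≤ #G.edgeFinset := by
  set f : Fin 9 → Finset (Sym2 (Fin 9)) :=
    fun v => G.edgeFinset.filter (fun e => ∀ x ∈ e, x ∈ insert v I) with hf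
  have hf2 : ∀ v ∈ univ \ I, 2 ≤ #(f v) := by
    intro v hv
    have hv' : v ∉ I := (Finset.mem_sdiff.mp hv).2
    have hc : (insert v I).card = 5 := by rw [Finset.card_insert_of_notMem hv', hI4]
    exact hG _ hc
  have hdisj : ∀ v ∈ (univ \ I : Finset (Fin 9)), ∀ w ∈ univ \ I, v ≠ w →
      Disjoint (f v) (f w) := by
    intro v hv w hw hvw
    rw [Finset.disjoint_left]
    intro e hev hew
    rw [hf, Finset.mem_filter] at hev hew
    obtain ⟨heE, hv'⟩ := hev
    obtain ⟨-, hw'⟩ := hew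
    rw [mem_edgeFinset] at heE
    induction e with
    | h a b =>
      rw [mem_edgeSet] at heE
      have ha : a ∈ I := by
        rcases Finset.mem_insert.mp (hv' a (by simp)) with h | h
        · rcases Finset.mem_insert.mp (hw' a (by simp)) with h' | h'
          · exact absurd (h ▸ h') hvw
          · exact h'
        · exact h
      have hb : b ∈ I := by
        rcases Finset.mem_insert.mp (hv' b (by simp)) with h | h
        · rcases Finset.mem_insert.mp (hw' b (by simp)) with h' | h'
          · exact absurd (h ▸ h') hvw
          · exact h'
        · exact h
      exact hind a ha b hb heE
  have hsub : (univ \ I).biUnion f ⊆ G.edgeFinset :=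
    Finset.biUnion_subset.mpr fun v _ => Finset.filter_subset _ _
  have hcard : #((univ : Finset (Fin 9)) \ I) = 5 := by
    rw [Finset.card_sdiff_of_subset (Finset.subset_univ I), Finset.card_univ, hI4]; rfl
  calc (9 : ℕ) ≤ 2 * 5 := by norm_num
    _ = ∑ _v ∈ (univ : Finset (Fin 9)) \ I, 2 := by rw [Finset.sum_const, hcard]; ring
    _ ≤ ∑ v ∈ (univ : Finset (Fin 9)) \ I, #(f v) := Finset.sum_le_sum hf2
    _ = #((univ \ I).biUnion f) := (Finset.card_biUnion hdisj).symm
    _ ≤ #G.edgeFinset := Finset.card_le_card hsub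

lemma lower (G : SimpleGraph (Fin 9)) (hG : Spans2 G) : 9 ≤ #G.edgeFinset := by
  by_cases hex : ∃ I : Finset (Fin 9), I.card = 4 ∧ ∀ a ∈ I, ∀ b ∈ I, ¬G.Adj a b
  · obtain ⟨I, hI4, hind⟩ := hex
    exact caseA G hG I hI4 hind
  · have hcf : Gᶜ.CliqueFree 4 := by
      intro t ht
      refine hex ⟨t, ht.2, fun a ha b hb hadj => ?_⟩
      by_cases hab : a = b
      · exact G.irrefl (hab ▸ hadj)
      · exact ((SimpleGraph.compl_adj G a b).mp (ht.1 ha hb hab)).2 hadj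
    have h1 := sum36 G
    have h2 := compl_bound G hcf
    omega

end Stmt4Aux

open Stmt4Aux in
theorem stmt_4 :
    IsLeast {m : ℕ | ∃ G : SimpleGraph (Fin 9), Spans2 G ∧ G.edgeFinset.card = m} 9 := by
  constructor
  · exact ⟨G3, G3_spans2, (cardEF G3).trans G3_card⟩
  · rintro m ⟨G, hG, rfl⟩
    exact le_trans (lower G hG) (le_of_eq (cardEF G))
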